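/- Suppose f : ℝ^d → ℝ is L_f-smooth, h : ℝ^d → ℝ is L_h-smooth, and g : ℝ^d → ℝ ∪ {+∞} is proper, lower semicontinuous and ρ-weakly convex. Let γ ∈ (0, 1/ρ). Then the Davis–Yin map is Lipschitz: for all u₁, u₂ ∈ ℝ^d, if y_i (i = 1, 2) is the unique minimizer over y ∈ ℝ^d of g(y) + (1/(2γ))‖y − (u_i − γ∇(f+h)(u_i))‖², then ‖y₁ − y₂‖ ≤ ((1 + γ(L_f + L_h))/(1 − γρ)) ‖u₁ − u₂‖. -/

import Mathlib

set_option maxHeartbeats 1000000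


open scoped RealInnerProductSpace

/-- `g` is `ρ`-weakly convex: `g + (ρ/2)‖·‖²` is convex (extended-real-valued version). -/
def WeaklyConvexE {E : Type*} [NormedAddCommGroup E] [InnerProductSpace ℝ E]
    (ρ : ℝ) (g : E → EReal) : Prop :=
  ∀ x y : E, ∀ t : ℝ, 0 ≤ t → t ≤ 1 →
    g (t • x + (1 - t) • y) + (((ρ / 2) * ‖t • x + (1 - t) • y‖ ^ 2 : ℝ) : EReal) ≤
      (t : EReal) * (g x + (((ρ / 2) * ‖x‖ ^ 2 : ℝ) : EReal)) +
        ((1 - t : ℝ) : EReal) * (g y + (((ρ / 2) * ‖y‖ ^ 2 : ℝ) : EReal))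

private lemma aux_ne_top {a b : EReal} {r : ℝ} (hb : b ≠ ⊤) (hle : a + (r : EReal) ≤ b) :
    a ≠ ⊤ := by
  intro ha
  rw [ha] at hle
  simp [EReal.top_add_coe] at hle
  exact hb (top_le_iff.mp (hle ▸ le_refl _))

private lemma aux_comb {E : Type*} [NormedAddCommGroup E] [InnerProductSpace ℝ E]
    (u v : E) (t : ℝ) :
    ‖t • v + (1 - t) • u‖ ^ 2
      = t * ‖v‖ ^ 2 + (1 - t) * ‖u‖ ^ 2 - t * (1 - t) * ‖v - u‖ ^ 2 := by
  have e1 : ∀ x : E, ‖x‖ ^ 2 = ⟪x, x⟫ := fun x => (real_inner_self_eq_norm_sq x).symm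
  simp only [e1, inner_add_add_self, inner_sub_sub_self, real_inner_smul_left,
    real_inner_smul_right]
  ring

private lemma aux_grad_add {E : Type*} [NormedAddCommGroup E] [InnerProductSpace ℝ E]
    [FiniteDimensional ℝ E] (f h : E → ℝ) (hfd : Differentiable ℝ f)
    (hhd : Differentiable ℝ h) (u : E) :
    gradient (fun w => f w + h w) u = gradient f u + gradient h u := by
  have h1 : HasGradientAt f (gradient f u) u := (hfd u).hasGradientAt
  have h2 : HasGradientAt h (gradient h u) u := (hhd u).hasGradientAt
  have h3 : HasFDerivAt (fun w => f w + h w)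
      (InnerProductSpace.toDual ℝ E (gradient f u + gradient h u)) u := by
    rw [map_add]
    exact h1.hasFDerivAt.add h2.hasFDerivAt
  exact (hasGradientAt_iff_hasFDerivAt.mpr h3).gradient

theorem dy_map_lipschitz
    {E : Type*} [NormedAddCommGroup E] [InnerProductSpace ℝ E] [FiniteDimensional ℝ E]
    (f h : E → ℝ) (g : E → EReal) (Lf Lh ρ : ℝ)
    (hLf : 0 ≤ Lf) (hLh : 0 ≤ Lh) (hρ : 0 ≤ ρ)
    (hfd : Differentiable ℝ f)
    (hflip : ∀ x y : E, ‖gradient f x - gradient f y‖ ≤ Lf * ‖x - y‖)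
    (hhd : Differentiable ℝ h)
    (hhlip : ∀ x y : E, ‖gradient h x - gradient h y‖ ≤ Lh * ‖x - y‖)
    (hgtop : ∃ x, g x ≠ ⊤) (hgbot : ∀ x, g x ≠ ⊥)
    (hglsc : LowerSemicontinuous g)
    (hwc : WeaklyConvexE ρ g)
    (γ : ℝ) (hγ0 : 0 < γ) (hγρ : γ * ρ < 1)
    (u₁ u₂ y₁ y₂ : E)
    (hy₁ : ∀ z : E,
      g y₁ + ((1 / (2 * γ) *
        ‖y₁ - (u₁ - γ • gradient (fun w => f w + h w) u₁)‖ ^ 2 : ℝ) : EReal) ≤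
      g z + ((1 / (2 * γ) *
        ‖z - (u₁ - γ • gradient (fun w => f w + h w) u₁)‖ ^ 2 : ℝ) : EReal))
    (hy₂ : ∀ z : E,
      g y₂ + ((1 / (2 * γ) *
        ‖y₂ - (u₂ - γ • gradient (fun w => f w + h w) u₂)‖ ^ 2 : ℝ) : EReal) ≤
      g z + ((1 / (2 * γ) *
        ‖z - (u₂ - γ • gradient (fun w => f w + h w) u₂)‖ ^ 2 : ℝ) : EReal)) :
    ‖y₁ - y₂‖ ≤ ((1 + γ * (Lf + Lh)) / (1 - γ * ρ)) * ‖u₁ - u₂‖ := by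
  set w₁ := u₁ - γ • gradient (fun w => f w + h w) u₁ with hw₁
  set w₂ := u₂ - γ • gradient (fun w => f w + h w) u₂ with hw₂
  set c : ℝ := 1 / (2 * γ) with hc
  have hγρ' : 0 < 1 - γ * ρ := by linarith
  have hc0 : 0 < c := by positivity
  have hdenom : 0 < (1 + γ * (Lf + Lh)) := by positivity
  -- finiteness of g y₁, g y₂
  obtain ⟨x0, hx0⟩ := hgtop
  have g1top : g y₁ ≠ ⊤ := aux_ne_top ((EReal.add_lt_top hx0 (EReal.coe_ne_top _)).ne) (hy₁ x0)
  have g2top : g y₂ ≠ ⊤ := aux_ne_top ((EReal.add_lt_top hx0 (EReal.coe_ne_top _)).ne) (hy₂ x0)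
  set r1 : ℝ := (g y₁).toReal with hr1
  set r2 : ℝ := (g y₂).toReal with hr2
  have hgy1 : g y₁ = (r1 : EReal) := (EReal.coe_toReal g1top (hgbot y₁)).symm
  have hgy2 : g y₂ = (r2 : EReal) := (EReal.coe_toReal g2top (hgbot y₂)).symm
  have hDnn : 0 ≤ ‖y₁ - y₂‖ ^ 2 := by positivity
  -- key per-t inequality (generic in the roles of (y,w,r))
  have key : ∀ (ya yb wa : E) (ra rb : ℝ), g ya = (ra : EReal) → g yb = (rb : EReal) →
      (∀ z : E, g ya + ((c * ‖ya - wa‖ ^ 2 : ℝ) : EReal) ≤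
        g z + ((c * ‖z - wa‖ ^ 2 : ℝ) : EReal)) →
      ∀ t : ℝ, 0 < t → t ≤ 1 →
      (ra - rb) + c * (‖ya - wa‖ ^ 2 - ‖yb - wa‖ ^ 2)
        + (c - ρ / 2) * (1 - t) * ‖ya - yb‖ ^ 2 ≤ 0 := by
    intro ya yb wa ra rb hga hgb hmin t ht0 ht1
    set p : E := t • yb + (1 - t) • ya with hp
    have hwc' := hwc yb ya t ht0.le ht1
    rw [hga, hgb, ← hp] at hwc'
    have hrhs_ne : ((t : EReal) * ((rb : EReal) + (((ρ / 2) * ‖yb‖ ^ 2 : ℝ) : EReal)) +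
        ((1 - t : ℝ) : EReal) * ((ra : EReal) + (((ρ / 2) * ‖ya‖ ^ 2 : ℝ) : EReal))) ≠ ⊤ := by
      push_cast
      exact EReal.coe_ne_top _
    have gptop : g p ≠ ⊤ := aux_ne_top hrhs_ne hwc'
    set rp : ℝ := (g p).toReal with hrp
    have hgp : g p = (rp : EReal) := (EReal.coe_toReal gptop (hgbot p)).symm
    rw [hgp] at hwc'
    have A : rp + (ρ / 2) * ‖p‖ ^ 2 ≤
        t * (rb + (ρ / 2) * ‖yb‖ ^ 2) + (1 - t) * (ra + (ρ / 2) * ‖ya‖ ^ 2) := by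
      exact_mod_cast hwc'
    have hminp := hmin p
    rw [hga, hgp] at hminp
    have B : ra + c * ‖ya - wa‖ ^ 2 ≤ rp + c * ‖p - wa‖ ^ 2 := by
      exact_mod_cast hminp
    have hp1 : ‖p‖ ^ 2 = t * ‖yb‖ ^ 2 + (1 - t) * ‖ya‖ ^ 2 - t * (1 - t) * ‖yb - ya‖ ^ 2 :=
      aux_comb ya yb t
    have hp2 : ‖p - wa‖ ^ 2 = t * ‖yb - wa‖ ^ 2 + (1 - t) * ‖ya - wa‖ ^ 2
        - t * (1 - t) * ‖yb - ya‖ ^ 2 := by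
      have hpe : p - wa = t • (yb - wa) + (1 - t) • (ya - wa) := by
        rw [hp]; module
      rw [hpe, aux_comb (ya - wa) (yb - wa) t, sub_sub_sub_cancel_right]
    have hnr : ‖yb - ya‖ ^ 2 = ‖ya - yb‖ ^ 2 := by rw [norm_sub_rev]
    rw [hp1, hnr] at A
    rw [hp2, hnr] at B
    have hmulkey : t * ((ra - rb) + c * (‖ya - wa‖ ^ 2 - ‖yb - wa‖ ^ 2)
        + (c - ρ / 2) * (1 - t) * ‖ya - yb‖ ^ 2) ≤ 0 := by nlinarith [A, B]
    by_contra hX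
    push_neg at hX
    nlinarith [mul_pos ht0 hX]
  -- combine the two key inequalities
  have key1 := key y₁ y₂ w₁ r1 r2 hgy1 hgy2 hy₁
  have key2 := key y₂ y₁ w₂ r2 r1 hgy2 hgy1 hy₂
  have hexp : ‖y₁ - w₁‖ ^ 2 - ‖y₂ - w₁‖ ^ 2 + (‖y₂ - w₂‖ ^ 2 - ‖y₁ - w₂‖ ^ 2)
      = -2 * ⟪y₁ - y₂, w₁ - w₂⟫ := by
    have e1 : ∀ x : E, ‖x‖ ^ 2 = ⟪x, x⟫ := fun x => (real_inner_self_eq_norm_sq x).symm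
    simp only [e1, inner_sub_sub_self, inner_sub_left, inner_sub_right]
    rw [real_inner_comm w₁ y₁, real_inner_comm w₁ y₂, real_inner_comm w₂ y₂,
      real_inner_comm w₂ y₁]
    ring
  set ip : ℝ := ⟪y₁ - y₂, w₁ - w₂⟫ with hip
  have hμpos : 0 < 2 * c - ρ := by
    rw [hc]
    have h2g : 2 * (1 / (2 * γ)) = 1 / γ := by field_simp
    rw [h2g, sub_pos, lt_div_iff₀ hγ0]
    linarith
  have hexp' : c * (‖y₁ - w₁‖ ^ 2 - ‖y₂ - w₁‖ ^ 2 + (‖y₂ - w₂‖ ^ 2 - ‖y₁ - w₂‖ ^ 2))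
      = c * (-2 * ip) := by rw [hexp]
  have hkeyt : ∀ t : ℝ, 0 < t → t ≤ 1 → (2 * c - ρ) * (1 - t) * ‖y₁ - y₂‖ ^ 2 ≤ 2 * c * ip := by
    intro t ht0 ht1
    have h1 := key1 t ht0 ht1
    have h2 := key2 t ht0 ht1
    have hn21 : ‖y₂ - y₁‖ ^ 2 = ‖y₁ - y₂‖ ^ 2 := by rw [norm_sub_rev]
    rw [hn21] at h2
    linarith [h1, h2, hexp']
  -- let t → 0
  have hmain : (2 * c - ρ) * ‖y₁ - y₂‖ ^ 2 ≤ 2 * c * ip := by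
    apply le_of_forall_pos_le_add
    intro ε hε
    set D : ℝ := ‖y₁ - y₂‖ ^ 2 with hD
    set μ : ℝ := 2 * c - ρ with hμ
    set t : ℝ := min 1 (ε / (μ * D + 1)) with htdef
    have hμD1 : 0 < μ * D + 1 := by nlinarith
    have ht0 : 0 < t := lt_min one_pos (by positivity)
    have ht1 : t ≤ 1 := min_le_left _ _
    have htε : t * (μ * D) ≤ ε := by
      have h1 : t ≤ ε / (μ * D + 1) := min_le_right _ _
      have h2 : 0 ≤ μ * D := by positivity
      have h3 : t * (μ * D) ≤ (ε / (μ * D + 1)) * (μ * D) :=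
        mul_le_mul_of_nonneg_right h1 h2
      have h4 : (ε / (μ * D + 1)) * (μ * D) ≤ ε := by
        rw [div_mul_eq_mul_div, div_le_iff₀ hμD1]
        nlinarith
      exact h3.trans h4
    have hk := hkeyt t ht0 ht1
    linarith [hk, htε]
  -- Cauchy-Schwarz
  have hcs : ip ≤ ‖y₁ - y₂‖ * ‖w₁ - w₂‖ := real_inner_le_norm _ _
  have hprox : (1 - γ * ρ) * ‖y₁ - y₂‖ ^ 2 ≤ ‖y₁ - y₂‖ * ‖w₁ - w₂‖ := by
    have hγne : γ ≠ 0 := ne_of_gt hγ0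
    have hγμ : γ * (2 * c - ρ) = 1 - γ * ρ := by
      rw [hc]; field_simp
    have h2cγ : γ * (2 * c) = 1 := by rw [hc]; field_simp
    have he := mul_le_mul_of_nonneg_left hmain hγ0.le
    have e1 : γ * ((2 * c - ρ) * ‖y₁ - y₂‖ ^ 2) = (1 - γ * ρ) * ‖y₁ - y₂‖ ^ 2 := by
      rw [← hγμ]; ring
    have e2 : γ * (2 * c * ip) = ip := by
      rw [← mul_assoc, h2cγ, one_mul]
    rw [e1, e2] at he
    linarith [hcs, he]
  -- forward step is Lipschitz
  have hfor : ‖w₁ - w₂‖ ≤ (1 + γ * (Lf + Lh)) * ‖u₁ - u₂‖ := by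
    have hg1 := aux_grad_add f h hfd hhd u₁
    have hg2 := aux_grad_add f h hfd hhd u₂
    have hwe : w₁ - w₂ = (u₁ - u₂) - γ • ((gradient f u₁ - gradient f u₂)
        + (gradient h u₁ - gradient h u₂)) := by
      rw [hw₁, hw₂, hg1, hg2]
      module
    rw [hwe]
    calc ‖(u₁ - u₂) - γ • ((gradient f u₁ - gradient f u₂)
          + (gradient h u₁ - gradient h u₂))‖
        ≤ ‖u₁ - u₂‖ + ‖γ • ((gradient f u₁ - gradient f u₂)
          + (gradient h u₁ - gradient h u₂))‖ := norm_sub_le _ _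
      _ = ‖u₁ - u₂‖ + γ * ‖(gradient f u₁ - gradient f u₂)
          + (gradient h u₁ - gradient h u₂)‖ := by
          rw [norm_smul, Real.norm_eq_abs, abs_of_pos hγ0]
      _ ≤ ‖u₁ - u₂‖ + γ * (‖gradient f u₁ - gradient f u₂‖
          + ‖gradient h u₁ - gradient h u₂‖) := by
          have := norm_add_le (gradient f u₁ - gradient f u₂)
            (gradient h u₁ - gradient h u₂)
          nlinarith
      _ ≤ ‖u₁ - u₂‖ + γ * (Lf * ‖u₁ - u₂‖ + Lh * ‖u₁ - u₂‖) := by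
          have h1 := hflip u₁ u₂
          have h2 := hhlip u₁ u₂
          nlinarith
      _ = (1 + γ * (Lf + Lh)) * ‖u₁ - u₂‖ := by ring
  -- conclude
  rcases eq_or_lt_of_le (norm_nonneg (y₁ - y₂)) with hz | hz
  · rw [← hz]
    positivity
  · rw [div_mul_eq_mul_div, le_div_iff₀ hγρ']
    have h1 : (1 - γ * ρ) * ‖y₁ - y₂‖ ≤ ‖w₁ - w₂‖ := by
      nlinarith [hprox, hz]
    nlinarith [h1, hfor, norm_nonneg (u₁ - u₂)]
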